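/- Let p = (p_1,...,p_k) be a probability vector with all p_i > 0, and let 0 < q < 1. Then the probability vector f = (f_1,...,f_k) minimizing the GCE risk ∑_y p_y (1 - f_y^q)/q over the probability simplex is given by f_y = p_y^{1/(1-q)} / ∑_i p_i^{1/(1-q)}. -/

import Mathlib

open Finset

/-- Theorem 1: for 0 < q < 1, the GCE risk over the probability simplex is
minimized by the power-normalized posterior. -/
theorem gce_minimizer_lt_one (k : ℕ) (hk : 0 < k) (p : Fin k → ℝ)
    (hp : ∀ i, 0 < p i) (hpsum : ∑ i, p i = 1)
    (q : ℝ) (hq0 : 0 < q) (hq1 : q < 1) :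
    let f : Fin k → ℝ := fun y => p y ^ (1 / (1 - q)) / ∑ i, p i ^ (1 / (1 - q))
    (∀ i, 0 ≤ f i) ∧ (∑ i, f i = 1) ∧
      ∀ g : Fin k → ℝ, (∀ i, 0 ≤ g i) → (∑ i, g i = 1) →
        ∑ y, p y * ((1 - f y ^ q) / q) ≤ ∑ y, p y * ((1 - g y ^ q) / q) := by
  intro f
  have h1q : 0 < 1 - q := by linarith
  set P : ℝ := 1 / (1 - q) with hP
  set S : ℝ := ∑ i, p i ^ P with hS
  have hSpos : 0 < S := by
    apply Finset.sum_pos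
    · intro i _; exact Real.rpow_pos_of_pos (hp i) _
    · exact Finset.univ_nonempty_iff.mpr (Fin.pos_iff_nonempty.mp hk)
  have hfnn : ∀ i, 0 ≤ f i := fun i =>
    div_nonneg (Real.rpow_pos_of_pos (hp i) _).le hSpos.le
  have hfsum : ∑ i, f i = 1 := by
    simp only [f, ← Finset.sum_div]
    rw [← hS, div_self hSpos.ne']
  refine ⟨hfnn, hfsum, ?_⟩
  -- key: ∑ p y * f y ^ q = S ^ (1 - q)
  have hkey : ∑ y, p y * f y ^ q = S ^ (1 - q) := by
    have step : ∀ y : Fin k, p y * f y ^ q = p y ^ P / S ^ q := by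
      intro y
      have hexp : (1:ℝ) + P * q = P := by rw [hP]; field_simp; ring
      calc p y * (p y ^ P / S) ^ q
          = p y ^ (1:ℝ) * (p y ^ (P * q) / S ^ q) := by
            rw [Real.rpow_one, Real.div_rpow (Real.rpow_nonneg (hp y).le _) hSpos.le,
              ← Real.rpow_mul (hp y).le]
        _ = p y ^ ((1:ℝ) + P * q) / S ^ q := by rw [Real.rpow_add (hp y), mul_div_assoc]
        _ = p y ^ P / S ^ q := by rw [hexp]
    rw [Finset.sum_congr rfl fun y _ => step y, ← Finset.sum_div, ← hS,
      Real.rpow_sub hSpos, Real.rpow_one]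
  intro g hg hgsum
  -- Hölder: ∑ p y * g y ^ q ≤ S ^ (1 - q)
  have hholder : ∑ y, p y * g y ^ q ≤ S ^ (1 - q) := by
    have hconj : Real.HolderConjugate P (1 / q) := by
      rw [Real.holderConjugate_iff]; constructor
      · rw [hP, lt_div_iff₀ h1q]; linarith
      · rw [hP]; simp
    have H := Real.inner_le_Lp_mul_Lq_of_nonneg (s := Finset.univ)
      (f := p) (g := fun y => g y ^ q) hconj
      (fun i _ => (hp i).le) (fun i _ => Real.rpow_nonneg (hg i) _)
    have hgq : ∑ i, (g i ^ q) ^ (1 / q) = 1 := by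
      have hterm : ∀ i : Fin k, (g i ^ q) ^ (1 / q) = g i := fun i => by
        rw [← Real.rpow_mul (hg i), mul_one_div, div_self hq0.ne', Real.rpow_one]
      rw [Finset.sum_congr rfl fun i _ => hterm i, hgsum]
    rw [hgq, ← hS] at H
    have h1P : 1 / P = 1 - q := by rw [hP, one_div_one_div]
    have h1Q : 1 / (1 / q) = q := one_div_one_div q
    rw [h1P, h1Q, Real.one_rpow, mul_one] at H
    exact H
  have hle : ∑ y, p y * g y ^ q ≤ ∑ y, p y * f y ^ q := by rw [hkey]; exact hholder
  have expand : ∀ h : Fin k → ℝ,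
      ∑ y, p y * ((1 - h y) / q) = (1 - ∑ y, p y * h y) / q := by
    intro h
    rw [eq_div_iff hq0.ne', Finset.sum_mul]
    have hterm : ∀ y : Fin k, p y * ((1 - h y) / q) * q = p y - p y * h y := fun y => by
      field_simp
    rw [Finset.sum_congr rfl fun y _ => hterm y, Finset.sum_sub_distrib, hpsum]
  calc ∑ y, p y * ((1 - f y ^ q) / q) = (1 - ∑ y, p y * f y ^ q) / q :=
        expand (fun y => f y ^ q)
    _ ≤ (1 - ∑ y, p y * g y ^ q) / q := by
        gcongr (1 - ?_) / q
    _ = ∑ y, p y * ((1 - g y ^ q) / q) := (expand (fun y => g y ^ q)).symm
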